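/- Every medium (S,T) is isomorphic to the representing medium (F, G_F) of some well-graded family F of finite subsets of a set X; that is, there exist bijections α : S → F and β : T → G_F such that for all states S, V and every token τ: Sτ = V if and only if α(S)β(τ) = α(V). -/

import Mathlib

open scoped Classical symmDiff

universe u

namespace Media

variable {S : Type u}

/-- The state obtained by applying the message (string of tokens) `m` to the state `s`. -/
def apply (s : S) (m : List (S → S)) : S :=
  m.foldl (fun x τ => τ x) s

/-- The sequence of states `S₀ = s, S₁, …, Sₙ` produced by the message `m` from the state `s`. -/
def produced (s : S) (m : List (S → S)) : List S :=
  m.scanl (fun x τ => τ x) s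

/-- `τ'` is a reverse of the token `τ`. -/
def IsReverse (τ τ' : S → S) : Prop :=
  ∀ P Q : S, P ≠ Q → (τ P = Q ↔ τ' Q = P)

/-- The message `m` is stepwise effective for the state `s`. -/
def StepwiseEffective (s : S) (m : List (S → S)) : Prop :=
  List.Chain' (· ≠ ·) (produced s m)

/-- The message `m` is consistent: it does not contain both a token and its reverse. -/
def Consistent (m : List (S → S)) : Prop :=
  ∀ τ ∈ m, ∀ τ' ∈ m, ¬ IsReverse τ τ'

/-- The message `m` is concise for the state `s`. -/
def Concise (s : S) (m : List (S → S)) : Prop :=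
  StepwiseEffective s m ∧ Consistent m ∧ m.Nodup

/-- The message `m` is vacuous: its indices can be partitioned into pairs of
mutually reverse tokens. -/
def Vacuous (m : List (S → S)) : Prop :=
  ∃ f : Fin m.length → Fin m.length, Function.Involutive f ∧
    (∀ i, f i ≠ i) ∧ ∀ i, IsReverse (m.get i) (m.get (f i))

/-- The message `m` is closed for the state `s`. -/
def Closed (s : S) (m : List (S → S)) : Prop :=
  StepwiseEffective s m ∧ apply s m = s

/-- `(S, T)` is a medium: a token system satisfying axioms [M1] and [M2]. -/
def IsMedium (T : Set (S → S)) : Prop :=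
  (∃ a b : S, a ≠ b) ∧ T.Nonempty ∧ (∀ τ ∈ T, τ ≠ id) ∧
  (∀ P Q : S, P ≠ Q →
    ∃ m : List (S → S), (∀ τ ∈ m, τ ∈ T) ∧ Concise P m ∧ apply P m = Q) ∧
  (∀ (P : S) (m : List (S → S)), (∀ τ ∈ m, τ ∈ T) → Closed P m → Vacuous m)

end Media

namespace Media

variable {X : Type u}

/-- The token `γ_x` adding `x` to a member of the family `F` (when possible). -/
noncomputable def gammaAdd (F : Set (Finset X)) (x : X) : ↥F → ↥F :=
  fun A => if h : insert x (A : Finset X) ∈ F then ⟨insert x (A : Finset X), h⟩ else A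

/-- The token `γ̃_x` removing `x` from a member of the family `F` (when possible). -/
noncomputable def gammaRemove (F : Set (Finset X)) (x : X) : ↥F → ↥F :=
  fun A => if h : (A : Finset X).erase x ∈ F then ⟨(A : Finset X).erase x, h⟩ else A

/-- The family `G_F` of all transformations `γ_x`, `γ̃_x` for `x ∈ ∪F \ ∩F`. -/
def mediumTokens (F : Set (Finset X)) : Set (↥F → ↥F) :=
  {g | ∃ x : X, (∃ A ∈ F, x ∈ A) ∧ (∃ B ∈ F, x ∉ B) ∧
    (g = gammaAdd F x ∨ g = gammaRemove F x)}

/-- A family of finite subsets of `X` is well-graded. -/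
def WellGraded (F : Set (Finset X)) : Prop :=
  ∀ A ∈ F, ∀ B ∈ F, A ≠ B →
    ∃ c : ℕ → Finset X,
      c 0 = A ∧ c ((A ∆ B).card) = B ∧
      (∀ i ≤ (A ∆ B).card, c i ∈ F) ∧
      (∀ i, 1 ≤ i → i ≤ (A ∆ B).card → (c (i - 1) ∆ c i).card = 1)

end Media

open Media
namespace Media

variable {S : Type u}

-- basics
@[simp] lemma apply_nil (s : S) : apply s ([] : List (S → S)) = s := rfl
@[simp] lemma apply_cons (s : S) (τ : S → S) (m : List (S → S)) :
    apply s (τ :: m) = apply (τ s) m := rfl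
lemma apply_append (s : S) (m w : List (S → S)) :
    apply s (m ++ w) = apply (apply s m) w := List.foldl_append ..

@[simp] lemma se_nil (s : S) : StepwiseEffective s ([] : List (S → S)) := by
  simp [StepwiseEffective, produced, List.Chain']

lemma head?_scanl {α β : Type*} (f : β → α → β) (b : β) (l : List α) :
    (l.scanl f b).head? = some b := by cases l <;> simp [List.scanl]

lemma se_cons {s : S} {τ : S → S} {m : List (S → S)} :
    StepwiseEffective s (τ :: m) ↔ s ≠ τ s ∧ StepwiseEffective (τ s) m := by
  simp [StepwiseEffective, produced, List.scanl_cons, List.Chain', List.isChain_cons, head?_scanl]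

lemma se_append {s : S} {m w : List (S → S)} (h1 : StepwiseEffective s m)
    (h2 : StepwiseEffective (apply s m) w) : StepwiseEffective s (m ++ w) := by
  induction m generalizing s with
  | nil => simpa using h2
  | cons τ t ih =>
    rw [se_cons] at h1
    exact (se_cons).2 ⟨h1.1, ih h1.2 h2⟩

lemma se_take {s : S} {m : List (S → S)} (h : StepwiseEffective s m) (j : ℕ) :
    StepwiseEffective s (m.take j) := by
  induction m generalizing s j with
  | nil => simpa using h
  | cons τ t ih =>
    cases j with
    | zero => simp
    | succ j =>
      rw [se_cons] at h
      exact (se_cons).2 ⟨h.1, ih h.2 j⟩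

lemma se_step {s : S} {m : List (S → S)} (h : StepwiseEffective s m) {j : ℕ} (hj : j < m.length) :
    m.get ⟨j, hj⟩ (apply s (m.take j)) ≠ apply s (m.take j) := by
  induction m generalizing s j with
  | nil => simp at hj
  | cons τ t ih =>
    rw [se_cons] at h
    cases j with
    | zero => exact Ne.symm h.1
    | succ j => simpa using ih h.2 (by simpa using hj)

lemma apply_take_succ {s : S} {m : List (S → S)} {j : ℕ} (hj : j < m.length) :
    apply s (m.take (j + 1)) = m.get ⟨j, hj⟩ (apply s (m.take j)) := by
  rw [List.take_succ, apply_append]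
  have : m[j]? = some (m.get ⟨j, hj⟩) := by
    simp [List.getElem?_eq_getElem hj]
  rw [this]
  rfl

-- IsReverse basics
lemma IsReverse.symm {τ σ : S → S} (h : IsReverse τ σ) : IsReverse σ τ := by
  intro P Q hPQ
  exact (h Q P hPQ.symm).symm

lemma isReverse_unique {τ σ σ' : S → S} (h : IsReverse τ σ) (h' : IsReverse τ σ') : σ = σ' := by
  funext Q
  by_cases hx : ∃ P, P ≠ Q ∧ τ P = Q
  · obtain ⟨P, hPQ, hτ⟩ := hx
    rw [(h P Q hPQ).1 hτ, (h' P Q hPQ).1 hτ]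
  · push_neg at hx
    have h1 : σ Q = Q := by
      by_contra hne
      exact hx _ hne ((h (σ Q) Q hne).2 rfl)
    have h2 : σ' Q = Q := by
      by_contra hne
      exact hx _ hne ((h' (σ' Q) Q hne).2 rfl)
    rw [h1, h2]

noncomputable def rv (τ : S → S) : S → S :=
  if h : ∃ σ, IsReverse τ σ then h.choose else id

lemma rv_eq {τ σ : S → S} (h : IsReverse τ σ) : rv τ = σ := by
  rw [rv, dif_pos ⟨σ, h⟩]
  exact isReverse_unique (⟨σ, h⟩ : ∃ σ, IsReverse τ σ).choose_spec h

lemma isReverse_rv {τ : S → S} (h : ∃ σ, IsReverse τ σ) : IsReverse τ (rv τ) := by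
  rw [rv, dif_pos h]; exact h.choose_spec

lemma rv_rv {τ : S → S} (h : ∃ σ, IsReverse τ σ) : rv (rv τ) = τ :=
  rv_eq (isReverse_rv h).symm

-- counting
lemma count_eq_card (m : List (S → S)) (τ : S → S) :
    m.count τ = (Finset.univ.filter fun i : Fin m.length => m.get i = τ).card := by
  induction m with
  | nil => simp
  | cons a t ih =>
    rw [List.count_cons, ih, Finset.card_filter, Finset.card_filter]
    show _ = ∑ i : Fin (t.length + 1), if (a :: t).get i = τ then 1 else 0
    rw [Fin.sum_univ_succ]
    have hs : ∀ i : Fin t.length, (a :: t).get i.succ = t.get i := fun i => by simp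
    simp only [hs, List.get_cons_zero, beq_iff_eq]
    by_cases h : a = τ <;> simp only [h, ↓reduceIte] <;> omega

lemma count_eq_count_of_vacuous {m : List (S → S)} (hv : Vacuous m)
    {τ σ : S → S} (h : IsReverse τ σ) : m.count τ = m.count σ := by
  obtain ⟨f, hfi, -, hfr⟩ := hv
  rw [count_eq_card, count_eq_card]
  apply Finset.card_nbij' (fun i => f i) (fun i => f i)
  · intro i hi
    simp only [Finset.mem_coe, Finset.mem_filter, Finset.mem_univ, true_and] at hi ⊢
    have := hfr i
    rw [hi] at this
    exact isReverse_unique this h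
  · intro i hi
    simp only [Finset.mem_coe, Finset.mem_filter, Finset.mem_univ, true_and] at hi ⊢
    have := hfr i
    rw [hi] at this
    exact isReverse_unique this h.symm
  · intro i _; exact hfi i
  · intro i _; exact hfi i

end Media
namespace Media

variable {S : Type u} {T : Set (S → S)}

lemma IsMedium.m1 (hM : IsMedium T) : ∀ P Q : S, P ≠ Q →
    ∃ m : List (S → S), (∀ τ ∈ m, τ ∈ T) ∧ Concise P m ∧ apply P m = Q := hM.2.2.2.1

lemma IsMedium.m2 (hM : IsMedium T) : ∀ (P : S) (m : List (S → S)),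
    (∀ τ ∈ m, τ ∈ T) → Closed P m → Vacuous m := hM.2.2.2.2

lemma exists_moved {τ : S → S} (hτ : τ ∈ T) (hM : IsMedium T) : ∃ P, τ P ≠ P := by
  by_contra h
  push_neg at h
  exact hM.2.2.1 τ hτ (funext h)

lemma get_cons_tail_mem {τ : S → S} {m : List (S → S)} {j : Fin (τ :: m).length}
    (hj : j ≠ ⟨0, Nat.succ_pos _⟩) : (τ :: m).get j ∈ m := by
  rcases j with ⟨jv, hjv⟩
  cases jv with
  | zero => exact absurd (Fin.mk_eq_mk.mpr rfl) hj
  | succ k =>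
    have : (τ :: m).get ⟨k + 1, hjv⟩ = m.get ⟨k, by simpa using hjv⟩ := by simp
    rw [this]
    apply List.get_mem

lemma rev_exists {τ : S → S} (hM : IsMedium T) (hτ : τ ∈ T) : ∃ σ ∈ T, IsReverse τ σ := by
  obtain ⟨P, hP⟩ := exists_moved hτ hM
  obtain ⟨m, hmT, hmc, hma⟩ := hM.m1 (τ P) P (fun h => hP h)
  have hcl : Closed P (τ :: m) := by
    constructor
    · exact se_cons.2 ⟨Ne.symm hP, hmc.1⟩
    · rw [apply_cons, hma]
  obtain ⟨f, -, hfne, hfr⟩ := hM.m2 P (τ :: m) (by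
    intro x hx
    rcases List.mem_cons.1 hx with h | h
    · exact h ▸ hτ
    · exact hmT x h) hcl
  set i0 : Fin (τ :: m).length := ⟨0, Nat.succ_pos _⟩ with hi0
  have hget : (τ :: m).get (f i0) ∈ τ :: m := by apply List.get_mem
  refine ⟨(τ :: m).get (f i0), ?_, ?_⟩
  · rcases List.mem_cons.1 hget with h | h
    · rw [h]; exact hτ
    · exact hmT _ h
  · exact hfr i0

lemma rv_mem (hM : IsMedium T) {τ : S → S} (hτ : τ ∈ T) : rv τ ∈ T := by
  obtain ⟨σ, hσT, hσ⟩ := rev_exists hM hτ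
  rw [rv_eq hσ]; exact hσT

lemma exists_rev (hM : IsMedium T) {τ : S → S} (hτ : τ ∈ T) : ∃ σ, IsReverse τ σ := by
  obtain ⟨σ, -, hσ⟩ := rev_exists hM hτ
  exact ⟨σ, hσ⟩

lemma isReverse_rv' (hM : IsMedium T) {τ : S → S} (hτ : τ ∈ T) : IsReverse τ (rv τ) :=
  isReverse_rv (exists_rev hM hτ)

lemma rv_rv' (hM : IsMedium T) {τ : S → S} (hτ : τ ∈ T) : rv (rv τ) = τ :=
  rv_rv (exists_rev hM hτ)

lemma rv_ne (hM : IsMedium T) {τ : S → S} (hτ : τ ∈ T) : rv τ ≠ τ := by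
  intro heq
  have hrr : IsReverse τ τ := by
    have := isReverse_rv' hM hτ
    rwa [heq] at this
  obtain ⟨P, hP⟩ := exists_moved hτ hM
  obtain ⟨m, hmT, hmc, hma⟩ := hM.m1 (τ P) P (fun h => hP h)
  have hcl : Closed P (τ :: m) := ⟨se_cons.2 ⟨Ne.symm hP, hmc.1⟩, by rw [apply_cons, hma]⟩
  obtain ⟨f, -, hfne, hfr⟩ := hM.m2 P (τ :: m) (by
    intro x hx
    rcases List.mem_cons.1 hx with h | h
    · exact h ▸ hτ
    · exact hmT x h) hcl
  set i0 : Fin (τ :: m).length := ⟨0, Nat.succ_pos _⟩ with hi0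
  have h1 : IsReverse τ ((τ :: m).get (f i0)) := hfr i0
  have h2 : (τ :: m).get (f i0) = τ := by
    have := rv_eq h1
    rw [heq] at this
    exact this.symm
  have hmem : τ ∈ m := h2 ▸ get_cons_tail_mem (hfne i0)
  exact hmc.2.1 τ hmem τ hmem hrr

/-- a chosen concise message from `P` to `Q` -/
noncomputable def msg (hM : IsMedium T) (P Q : S) : List (S → S) :=
  if h : P ≠ Q then (hM.m1 P Q h).choose else []

lemma msg_memT (hM : IsMedium T) (P Q : S) : ∀ x ∈ msg hM P Q, x ∈ T := by
  rw [msg]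
  split
  · exact (hM.m1 P Q (by assumption)).choose_spec.1
  · simp

lemma concise_nil (P : S) : Concise P ([] : List (S → S)) := by
  refine ⟨se_nil P, ?_, List.nodup_nil⟩
  intro τ h; simp at h

lemma msg_concise (hM : IsMedium T) (P Q : S) : Concise P (msg hM P Q) := by
  rw [msg]
  split
  · exact (hM.m1 P Q (by assumption)).choose_spec.2.1
  · exact concise_nil P

lemma msg_apply (hM : IsMedium T) (P Q : S) : apply P (msg hM P Q) = Q := by
  rw [msg]
  split
  · exact (hM.m1 P Q (by assumption)).choose_spec.2.2
  · push_neg at *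
    simpa using by assumption

lemma consistent_not_mem {m : List (S → S)} (hc : Consistent m) (hM : IsMedium T)
    {τ : S → S} (hτ : τ ∈ T) (hm : τ ∈ m) : rv τ ∉ m := by
  intro h
  exact hc τ hm (rv τ) h (isReverse_rv' hM hτ)

lemma nodup_count_le {m : List (S → S)} (hn : m.Nodup) (τ : S → S) : m.count τ ≤ 1 :=
  List.nodup_iff_count_le_one.1 hn τ

/-- master lemma: τ occurs in a concise path P→Q iff its reverse occurs in any
concise path Q→P. -/
lemma mem_iff_rv_mem (hM : IsMedium T) {P Q : S} {m u : List (S → S)}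
    (hm : Concise P m) (hma : apply P m = Q) (hmT : ∀ x ∈ m, x ∈ T)
    (hu : Concise Q u) (hua : apply Q u = P) (huT : ∀ x ∈ u, x ∈ T)
    {τ : S → S} (hτ : τ ∈ T) : τ ∈ m ↔ rv τ ∈ u := by
  have hcl : Closed P (m ++ u) := by
    refine ⟨se_append hm.1 (by rw [hma]; exact hu.1), ?_⟩
    rw [apply_append, hma, hua]
  have hvac : Vacuous (m ++ u) := hM.m2 P (m ++ u) (by
    intro x hx
    rcases List.mem_append.1 hx with h | h
    · exact hmT x h
    · exact huT x h) hcl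
  have hcnt := count_eq_count_of_vacuous hvac (isReverse_rv' hM hτ)
  rw [List.count_append, List.count_append] at hcnt
  constructor
  · intro h
    have h1 : 1 ≤ m.count τ := List.count_pos_iff.2 h
    have h2 : m.count (rv τ) = 0 :=
      List.count_eq_zero.2 (consistent_not_mem hm.2.1 hM hτ h)
    have h3 : u.count (rv τ) ≤ 1 := nodup_count_le hu.2.2 _
    have h4 : 1 ≤ u.count (rv τ) := by omega
    exact List.count_pos_iff.1 h4
  · intro h
    have h1 : 1 ≤ u.count (rv τ) := List.count_pos_iff.2 h
    have h2 : u.count τ = 0 := by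
      apply List.count_eq_zero.2
      have := consistent_not_mem hu.2.1 hM (rv_mem hM hτ) h
      rwa [rv_rv' hM hτ] at this
    have : 1 ≤ m.count τ := by omega
    exact List.count_pos_iff.1 this

/-- any two concise messages between the same states have the same tokens -/
lemma tokens_unique (hM : IsMedium T) {P Q : S} {m m' : List (S → S)}
    (hm : Concise P m) (hma : apply P m = Q) (hmT : ∀ x ∈ m, x ∈ T)
    (hm' : Concise P m') (hma' : apply P m' = Q) (hmT' : ∀ x ∈ m', x ∈ T)
    (x : S → S) : x ∈ m ↔ x ∈ m' := by
  constructor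
  · intro h
    have hx : x ∈ T := hmT x h
    have h1 := (mem_iff_rv_mem hM hm hma hmT (msg_concise hM Q P) (msg_apply hM Q P)
      (msg_memT hM Q P) hx).1 h
    exact (mem_iff_rv_mem hM hm' hma' hmT' (msg_concise hM Q P) (msg_apply hM Q P)
      (msg_memT hM Q P) hx).2 h1
  · intro h
    have hx : x ∈ T := hmT' x h
    have h1 := (mem_iff_rv_mem hM hm' hma' hmT' (msg_concise hM Q P) (msg_apply hM Q P)
      (msg_memT hM Q P) hx).1 h
    exact (mem_iff_rv_mem hM hm hma hmT (msg_concise hM Q P) (msg_apply hM Q P)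
      (msg_memT hM Q P) hx).2 h1

end Media
namespace Media

variable {S : Type u} {T : Set (S → S)}

-- symmDiff helpers
lemma sd_insert {α : Type*} [DecidableEq α] {A : Finset α} {a : α} (h : a ∉ A) :
    (insert a A) ∆ A = {a} := by
  ext x
  simp only [Finset.mem_symmDiff, Finset.mem_insert, Finset.mem_singleton]
  constructor
  · rintro (⟨h1 | h1, h2⟩ | ⟨h1, h2⟩)
    · exact h1
    · exact absurd h1 h2
    · exact absurd (Or.inr h1) h2
  · rintro rfl
    exact Or.inl ⟨Or.inl rfl, h⟩

lemma sd_erase {α : Type*} [DecidableEq α] {A : Finset α} {a : α} (h : a ∈ A) :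
    (A.erase a) ∆ A = {a} := by
  ext x
  simp only [Finset.mem_symmDiff, Finset.mem_erase, Finset.mem_singleton]
  constructor
  · rintro (⟨⟨h1, h2⟩, h3⟩ | ⟨h1, h2⟩)
    · exact absurd h2 h3
    · by_contra hne
      exact h2 ⟨hne, h1⟩
  · rintro rfl
    exact Or.inr ⟨h, fun hc => hc.1 rfl⟩

lemma sd_singleton_not_mem {α : Type*} [DecidableEq α] {E : Finset α} {e : α} (h : e ∉ E) :
    E ∆ ({e} : Finset α) = insert e E := by
  ext x
  simp only [Finset.mem_symmDiff, Finset.mem_singleton, Finset.mem_insert]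
  constructor
  · rintro (⟨h1, h2⟩ | ⟨h1, h2⟩)
    · exact Or.inr h1
    · exact Or.inl h1
  · rintro (rfl | hx)
    · exact Or.inr ⟨rfl, h⟩
    · exact Or.inl ⟨hx, fun hc => h (hc ▸ hx)⟩

lemma sd_trans {α : Type*} [DecidableEq α] (A B C : Finset α) :
    A ∆ C = (A ∆ B) ∆ (B ∆ C) := by
  rw [symmDiff_assoc, ← symmDiff_assoc B B C, symmDiff_self, bot_symmDiff]

-- concise decomposition
lemma concise_cons {s : S} {τ : S → S} {m : List (S → S)} (h : Concise s (τ :: m)) :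
    Concise (τ s) m := by
  refine ⟨(se_cons.1 h.1).2, ?_, (List.nodup_cons.1 h.2.2).2⟩
  intro a ha b hb
  exact h.2.1 a (List.mem_cons_of_mem _ ha) b (List.mem_cons_of_mem _ hb)

lemma concise_take {s : S} {m : List (S → S)} (h : Concise s m) (j : ℕ) :
    Concise s (m.take j) := by
  refine ⟨se_take h.1 j, ?_, h.2.2.sublist (List.take_sublist j m)⟩
  intro a ha b hb
  exact h.2.1 a (List.mem_of_mem_take ha) b (List.mem_of_mem_take hb)

/-- the content of state `s` relative to the base state `s₀`, as a finite set of tokens -/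
noncomputable def ctn (hM : IsMedium T) (s₀ s : S) : Finset ↥T :=
  Set.Finite.toFinset (Set.Finite.preimage (Subtype.val_injective.injOn)
    ((msg hM s₀ s).finite_toSet))

lemma mem_ctn (hM : IsMedium T) (s₀ s : S) (x : ↥T) :
    x ∈ ctn hM s₀ s ↔ (x : S → S) ∈ msg hM s₀ s := by
  simp [ctn, Set.Finite.mem_toFinset]

lemma mem_ctn_iff (hM : IsMedium T) {s₀ s : S} {m : List (S → S)}
    (hm : Concise s₀ m) (hma : apply s₀ m = s) (hmT : ∀ x ∈ m, x ∈ T) (x : ↥T) :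
    x ∈ ctn hM s₀ s ↔ (x : S → S) ∈ m := by
  rw [mem_ctn]
  exact tokens_unique hM (msg_concise hM s₀ s) (msg_apply hM s₀ s) (msg_memT hM s₀ s)
    hm hma hmT x

@[simp] lemma ctn_base (hM : IsMedium T) (s₀ : S) : ctn hM s₀ s₀ = ∅ := by
  ext x
  rw [mem_ctn]
  simp [msg]

lemma ctn_mem_T {hM : IsMedium T} {s₀ s : S} {x : ↥T} (_ : x ∈ ctn hM s₀ s) :
    (x : S → S) ∈ T := x.2

/-- a token in the content of `s` is ineffective at `s` -/
lemma ctn_fix (hM : IsMedium T) {s₀ s : S} {τ : S → S} (hτ : τ ∈ T)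
    (h : (⟨τ, hτ⟩ : ↥T) ∈ ctn hM s₀ s) : τ s = s := by
  by_contra hne
  rw [mem_ctn] at h
  set m := msg hM s₀ s with hmdef
  set w := msg hM (τ s) s₀ with hwdef
  have hcl : Closed s₀ (m ++ [τ] ++ w) := by
    constructor
    · apply se_append
      · apply se_append (msg_concise hM s₀ s).1
        rw [msg_apply]
        exact se_cons.2 ⟨Ne.symm hne, se_nil _⟩
      · rw [apply_append, msg_apply]
        show StepwiseEffective (apply s [τ]) w
        simp only [apply_cons, apply_nil]
        exact (msg_concise hM (τ s) s₀).1
    · rw [apply_append, apply_append, msg_apply]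
      show apply (apply s [τ]) w = s₀
      simp only [apply_cons, apply_nil]
      exact msg_apply hM (τ s) s₀
  have hvac : Vacuous (m ++ [τ] ++ w) := by
    apply hM.m2 _ _ _ hcl
    intro x hx
    rcases List.mem_append.1 hx with hx | hx
    · rcases List.mem_append.1 hx with hx | hx
      · exact msg_memT hM s₀ s x hx
      · rw [List.mem_singleton.1 hx]; exact hτ
    · exact msg_memT hM (τ s) s₀ x hx
  have hcnt := count_eq_count_of_vacuous hvac (isReverse_rv' hM hτ)
  rw [List.count_append, List.count_append, List.count_append, List.count_append] at hcnt
  have c1 : 1 ≤ m.count τ := List.count_pos_iff.2 h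
  have c2 : ([τ] : List (S → S)).count τ = 1 := by simp
  have c3 : m.count (rv τ) = 0 :=
    List.count_eq_zero.2 (consistent_not_mem (msg_concise hM s₀ s).2.1 hM hτ h)
  have c4 : ([τ] : List (S → S)).count (rv τ) = 0 := by
    simp [List.count_singleton', rv_ne hM hτ, (rv_ne hM hτ).symm]
  have c5 : w.count (rv τ) ≤ 1 := nodup_count_le (msg_concise hM (τ s) s₀).2.2 _
  omega

end Media
namespace Media

variable {S : Type u} {T : Set (S → S)}

lemma step_insert (hM : IsMedium T) (s₀ : S) {s v : S} {τ : S → S} (hτ : τ ∈ T)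
    (hv : τ s = v) (hne : v ≠ s)
    (hr : (⟨rv τ, rv_mem hM hτ⟩ : ↥T) ∉ ctn hM s₀ s) :
    ctn hM s₀ v = insert (⟨τ, hτ⟩ : ↥T) (ctn hM s₀ s) ∧ (⟨τ, hτ⟩ : ↥T) ∉ ctn hM s₀ s := by
  have hτs : (⟨τ, hτ⟩ : ↥T) ∉ ctn hM s₀ s := by
    intro h
    exact hne (hv ▸ ctn_fix hM hτ h)
  have hτm : τ ∉ msg hM s₀ s := by
    intro h
    exact hτs ((mem_ctn hM s₀ s ⟨τ, hτ⟩).2 h)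
  have hrm : rv τ ∉ msg hM s₀ s := by
    intro h
    exact hr ((mem_ctn hM s₀ s ⟨rv τ, rv_mem hM hτ⟩).2 h)
  set m := msg hM s₀ s with hmdef
  have hcon : Concise s₀ (m ++ [τ]) := by
    refine ⟨?_, ?_, ?_⟩
    · apply se_append (msg_concise hM s₀ s).1
      rw [msg_apply]
      exact se_cons.2 ⟨fun h => hne (hv ▸ h.symm), se_nil _⟩
    · intro a ha b hb hab
      rcases List.mem_append.1 ha with ha | ha <;> rcases List.mem_append.1 hb with hb | hb
      · exact (msg_concise hM s₀ s).2.1 a ha b hb hab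
      · rw [List.mem_singleton.1 hb] at hab
        exact hrm (rv_eq hab.symm ▸ ha)
      · rw [List.mem_singleton.1 ha] at hab
        exact hrm (rv_eq hab ▸ hb)
      · rw [List.mem_singleton.1 ha, List.mem_singleton.1 hb] at hab
        exact rv_ne hM hτ (rv_eq hab)
    · rw [List.nodup_append]
      refine ⟨(msg_concise hM s₀ s).2.2, List.nodup_singleton τ, ?_⟩
      intro a ha b hb hab
      rw [List.mem_singleton.1 hb] at hab
      rw [hab] at ha
      exact hτm ha
  have happ : apply s₀ (m ++ [τ]) = v := by
    rw [apply_append, msg_apply]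
    show apply s [τ] = v
    simp [hv]
  have hTm : ∀ x ∈ m ++ [τ], x ∈ T := by
    intro x hx
    rcases List.mem_append.1 hx with hx | hx
    · exact msg_memT hM s₀ s x hx
    · rw [List.mem_singleton.1 hx]; exact hτ
  refine ⟨?_, hτs⟩
  ext x
  rw [mem_ctn_iff hM hcon happ hTm]
  simp only [List.mem_append, List.mem_singleton, Finset.mem_insert, mem_ctn]
  rw [Subtype.ext_iff]
  tauto

lemma step_erase (hM : IsMedium T) (s₀ : S) {s v : S} {τ : S → S} (hτ : τ ∈ T)
    (hv : τ s = v) (hne : v ≠ s)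
    (hr : (⟨rv τ, rv_mem hM hτ⟩ : ↥T) ∈ ctn hM s₀ s) :
    ctn hM s₀ v = (ctn hM s₀ s).erase ⟨rv τ, rv_mem hM hτ⟩ := by
  -- first: τ is not in the content of v
  have hτv : (⟨τ, hτ⟩ : ↥T) ∉ ctn hM s₀ v := by
    intro h
    have hτmv : τ ∈ msg hM s₀ v := (mem_ctn hM s₀ v ⟨τ, hτ⟩).1 h
    have hrw : rv τ ∈ msg hM v s₀ := by
      have := (mem_iff_rv_mem hM (msg_concise hM s₀ v) (msg_apply hM s₀ v)
        (msg_memT hM s₀ v) (msg_concise hM v s₀) (msg_apply hM v s₀)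
        (msg_memT hM v s₀) hτ).1 hτmv
      exact this
    have hrm : rv τ ∈ msg hM s₀ s := (mem_ctn hM s₀ s _).1 hr
    -- closed loop msg s₀ s ++ [τ] ++ msg v s₀
    set m := msg hM s₀ s
    set w := msg hM v s₀
    have hcl : Closed s₀ (m ++ [τ] ++ w) := by
      constructor
      · apply se_append
        · apply se_append (msg_concise hM s₀ s).1
          rw [msg_apply]
          exact se_cons.2 ⟨fun h => hne (hv ▸ h.symm), se_nil _⟩
        · rw [apply_append, msg_apply]
          show StepwiseEffective (apply s [τ]) w
          simp only [apply_cons, apply_nil, hv]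
          exact (msg_concise hM v s₀).1
      · rw [apply_append, apply_append, msg_apply]
        show apply (apply s [τ]) w = s₀
        simp only [apply_cons, apply_nil, hv]
        exact msg_apply hM v s₀
    have hvac : Vacuous (m ++ [τ] ++ w) := by
      apply hM.m2 _ _ _ hcl
      intro x hx
      rcases List.mem_append.1 hx with hx | hx
      · rcases List.mem_append.1 hx with hx | hx
        · exact msg_memT hM s₀ s x hx
        · rw [List.mem_singleton.1 hx]; exact hτ
      · exact msg_memT hM v s₀ x hx
    have hcnt := count_eq_count_of_vacuous hvac (isReverse_rv' hM hτ)
    rw [List.count_append, List.count_append, List.count_append, List.count_append] at hcnt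
    have c1 : m.count τ = 0 := by
      apply List.count_eq_zero.2
      intro hmem
      have := ctn_fix hM hτ ((mem_ctn hM s₀ s ⟨τ, hτ⟩).2 hmem)
      exact hne (hv ▸ this)
    have c2 : ([τ] : List (S → S)).count τ = 1 := by simp
    have c3 : w.count τ = 0 := by
      apply List.count_eq_zero.2
      intro hmem
      have := consistent_not_mem (msg_concise hM v s₀).2.1 hM hτ hmem
      exact this hrw
    have c4 : 1 ≤ m.count (rv τ) := List.count_pos_iff.2 hrm
    have c5 : ([τ] : List (S → S)).count (rv τ) = 0 := by
      simp [List.count_singleton', rv_ne hM hτ, (rv_ne hM hτ).symm]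
    have c6 : 1 ≤ w.count (rv τ) := List.count_pos_iff.2 hrw
    omega
  -- now apply step_insert at v with token rv τ
  have hvs : rv τ v = s := by
    have := (isReverse_rv' hM hτ s v (Ne.symm hne)).1 hv
    exact this
  have hrr : (⟨rv (rv τ), rv_mem hM (rv_mem hM hτ)⟩ : ↥T) ∉ ctn hM s₀ v := by
    have : rv (rv τ) = τ := rv_rv' hM hτ
    simpa [this] using hτv
  obtain ⟨h1, h2⟩ := step_insert hM s₀ (rv_mem hM hτ) hvs (Ne.symm hne) hrr
  rw [h1, Finset.erase_insert h2]

lemma step_symmdiff (hM : IsMedium T) (s₀ : S) {s v : S} {τ : S → S} (hτ : τ ∈ T)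
    (hv : τ s = v) (hne : v ≠ s) :
    ∃ e : ↥T, ctn hM s₀ v ∆ ctn hM s₀ s = {e} ∧ ((e : S → S) = τ ∨ (e : S → S) = rv τ) := by
  by_cases hr : (⟨rv τ, rv_mem hM hτ⟩ : ↥T) ∈ ctn hM s₀ s
  · refine ⟨⟨rv τ, rv_mem hM hτ⟩, ?_, Or.inr rfl⟩
    rw [step_erase hM s₀ hτ hv hne hr]
    exact sd_erase hr
  · obtain ⟨h1, h2⟩ := step_insert hM s₀ hτ hv hne hr
    refine ⟨⟨τ, hτ⟩, ?_, Or.inl rfl⟩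
    rw [h1]
    exact sd_insert h2

lemma walk (hM : IsMedium T) (s₀ : S) (m : List (S → S)) : ∀ s : S, Concise s m →
    (∀ x ∈ m, x ∈ T) → ∃ E : Finset ↥T,
      ctn hM s₀ (apply s m) ∆ ctn hM s₀ s = E ∧ E.card = m.length ∧
      ∀ e ∈ E, ∃ σ ∈ m, ((e : S → S) = σ ∨ (e : S → S) = rv σ) := by
  induction m with
  | nil =>
    intro s _ _
    exact ⟨∅, by simp [symmDiff_self], by simp, by simp⟩
  | cons τ t ih =>
    intro s hc hT
    have hτT : τ ∈ T := hT τ (List.mem_cons_self)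
    have heff : τ s ≠ s := Ne.symm (se_cons.1 hc.1).1
    obtain ⟨E₂, hE2, hcard2, hmem2⟩ := ih (τ s) (concise_cons hc)
      (fun x hx => hT x (List.mem_cons_of_mem _ hx))
    obtain ⟨e₁, he1, he1tok⟩ := step_symmdiff hM s₀ hτT rfl heff
    have he1nE2 : e₁ ∉ E₂ := by
      intro hmem
      obtain ⟨σ, hσt, hd⟩ := hmem2 e₁ hmem
      have hσT : σ ∈ T := hT σ (List.mem_cons_of_mem _ hσt)
      have hnd : τ ∉ t := (List.nodup_cons.1 hc.2.2).1
      rcases he1tok with h1 | h1 <;> rcases hd with h2 | h2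
      · have hts : τ = σ := h1.symm.trans h2
        rw [hts]at hnd
        exact hnd hσt
      · -- τ = rv σ
        have : IsReverse σ τ := by
          rw [h1] at h2
          rw [h2]
          exact isReverse_rv' hM hσT
        exact hc.2.1 σ (List.mem_cons_of_mem _ hσt) τ (List.mem_cons_self) this
      · -- rv τ = σ
        have : IsReverse τ σ := by
          rw [h1] at h2
          rw [← h2]
          exact isReverse_rv' hM hτT
        exact hc.2.1 τ (List.mem_cons_self) σ (List.mem_cons_of_mem _ hσt) this
      · -- rv τ = rv σ
        have : τ = σ := by
          have := congrArg rv (h1.symm.trans h2 : rv τ = rv σ)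
          rwa [rv_rv' hM hτT, rv_rv' hM hσT] at this
        rw [this] at hnd
        exact hnd hσt
    refine ⟨insert e₁ E₂, ?_, ?_, ?_⟩
    · rw [apply_cons]
      rw [sd_trans (ctn hM s₀ (apply (τ s) t)) (ctn hM s₀ (τ s)) (ctn hM s₀ s), hE2, he1]
      exact sd_singleton_not_mem he1nE2
    · rw [Finset.card_insert_of_notMem he1nE2, hcard2]
      simp
    · intro e he
      rcases Finset.mem_insert.1 he with rfl | he
      · exact ⟨τ, List.mem_cons_self, he1tok⟩
      · obtain ⟨σ, hσt, hd⟩ := hmem2 e he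
        exact ⟨σ, List.mem_cons_of_mem _ hσt, hd⟩

lemma walklen (hM : IsMedium T) (s₀ : S) {m : List (S → S)} {s : S} (hc : Concise s m)
    (hT : ∀ x ∈ m, x ∈ T) :
    (ctn hM s₀ (apply s m) ∆ ctn hM s₀ s).card = m.length := by
  obtain ⟨E, hE, hcard, -⟩ := walk hM s₀ m s hc hT
  rw [hE, hcard]

lemma ctn_inj (hM : IsMedium T) (s₀ : S) {a b : S} (h : ctn hM s₀ a = ctn hM s₀ b) :
    a = b := by
  by_contra hne
  have hlen := walklen hM s₀ (msg_concise hM a b) (msg_memT hM a b)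
  rw [msg_apply, h, symmDiff_self] at hlen
  have : msg hM a b = [] := List.length_eq_zero_iff.1 (by simpa using hlen.symm)
  have := msg_apply hM a b
  rw [this] at *
  exact hne (by rw [← msg_apply hM a b, ‹msg hM a b = []›, apply_nil])

end Media
namespace Media

variable {S : Type u} {T : Set (S → S)}

lemma wellGraded_range (hM : IsMedium T) (s₀ : S) :
    WellGraded (Set.range (ctn hM s₀)) := by
  have hi : (fun (a b : ↥T) => Classical.propDecidable (a = b)) =
      (fun a b => Subtype.instDecidableEq a b) := Subsingleton.elim _ _
  unfold WellGraded
  rw [hi]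
  rintro A ⟨a, rfl⟩ B ⟨b, rfl⟩ hAB
  have hab : a ≠ b := fun h => hAB (h ▸ rfl)
  have hcard : (ctn hM s₀ a ∆ ctn hM s₀ b).card = (msg hM a b).length := by
    have := walklen hM s₀ (msg_concise hM a b) (msg_memT hM a b)
    rw [msg_apply] at this
    rw [symmDiff_comm]
    exact this
  refine ⟨fun i => ctn hM s₀ (apply a ((msg hM a b).take i)), by simp, ?_, ?_, ?_⟩
  · show ctn hM s₀ (apply a ((msg hM a b).take ((ctn hM s₀ a ∆ ctn hM s₀ b).card))) = _
    rw [hcard, List.take_length, msg_apply]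
  · intro i _
    exact Set.mem_range_self _
  · intro i hi1 hi2
    show (ctn hM s₀ (apply a ((msg hM a b).take (i - 1))) ∆
      ctn hM s₀ (apply a ((msg hM a b).take i))).card = 1
    rw [hcard] at hi2
    obtain ⟨j, rfl⟩ : ∃ j, i = j + 1 := ⟨i - 1, by omega⟩
    have hj : j < (msg hM a b).length := by omega
    simp only [Nat.add_sub_cancel]
    set m := msg hM a b
    set s' := apply a (m.take j) with hs'
    have heff : m.get ⟨j, hj⟩ s' ≠ s' := se_step (msg_concise hM a b).1 hj
    have hτT : m.get ⟨j, hj⟩ ∈ T := msg_memT hM a b _ (by apply List.get_mem)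
    obtain ⟨e, he, -⟩ := step_symmdiff hM s₀ hτT rfl heff
    rw [apply_take_succ hj]
    rw [symmDiff_comm, he]
    simp

/-- `τ` points towards the base state somewhere: it occurs in some concise
message arriving at `s₀`. -/
def IsNeg (hM : IsMedium T) (s₀ : S) (τ : S → S) : Prop :=
  ∃ (W : S) (mm : List (S → S)), Concise W mm ∧ apply W mm = s₀ ∧
    (∀ x ∈ mm, x ∈ T) ∧ τ ∈ mm

lemma neg_not_mem (hM : IsMedium T) (s₀ : S) {τ : S → S} (hτ : τ ∈ T)
    (hneg : IsNeg hM s₀ τ) (s : S) : (⟨τ, hτ⟩ : ↥T) ∉ ctn hM s₀ s := by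
  intro hmem
  have hms : τ ∈ msg hM s₀ s := (mem_ctn hM s₀ s _).1 hmem
  obtain ⟨W, mm, hc, ha, hT, hm⟩ := hneg
  have hcl : Closed W (mm ++ msg hM s₀ s ++ msg hM s W) := by
    constructor
    · apply se_append
      · apply se_append hc.1
        rw [ha]
        exact (msg_concise hM s₀ s).1
      · rw [apply_append, ha, msg_apply]
        exact (msg_concise hM s W).1
    · rw [apply_append, apply_append, ha, msg_apply, msg_apply]
  have hvac : Vacuous (mm ++ msg hM s₀ s ++ msg hM s W) := by
    apply hM.m2 _ _ _ hcl
    intro x hx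
    rcases List.mem_append.1 hx with hx | hx
    · rcases List.mem_append.1 hx with hx | hx
      · exact hT x hx
      · exact msg_memT hM s₀ s x hx
    · exact msg_memT hM s W x hx
  have hcnt := count_eq_count_of_vacuous hvac (isReverse_rv' hM hτ)
  rw [List.count_append, List.count_append, List.count_append, List.count_append] at hcnt
  have c1 : 1 ≤ mm.count τ := List.count_pos_iff.2 hm
  have c2 : 1 ≤ (msg hM s₀ s).count τ := List.count_pos_iff.2 hms
  have c3 : mm.count (rv τ) = 0 := List.count_eq_zero.2 (consistent_not_mem hc.2.1 hM hτ hm)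
  have c4 : (msg hM s₀ s).count (rv τ) = 0 :=
    List.count_eq_zero.2 (consistent_not_mem (msg_concise hM s₀ s).2.1 hM hτ hms)
  have c5 : (msg hM s W).count (rv τ) ≤ 1 := nodup_count_le (msg_concise hM s W).2.2 _
  omega

lemma pos_rv_not_mem (hM : IsMedium T) (s₀ : S) {τ : S → S} (hτ : τ ∈ T)
    (hpos : ¬ IsNeg hM s₀ τ) (s : S) :
    (⟨rv τ, rv_mem hM hτ⟩ : ↥T) ∉ ctn hM s₀ s := by
  intro hmem
  have hms : rv τ ∈ msg hM s₀ s := (mem_ctn hM s₀ s _).1 hmem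
  have := (mem_iff_rv_mem hM (msg_concise hM s₀ s) (msg_apply hM s₀ s) (msg_memT hM s₀ s)
    (msg_concise hM s s₀) (msg_apply hM s s₀) (msg_memT hM s s₀) (rv_mem hM hτ)).1 hms
  rw [rv_rv' hM hτ] at this
  exact hpos ⟨s, msg hM s s₀, msg_concise hM s s₀, msg_apply hM s s₀, msg_memT hM s s₀, this⟩

lemma neg_rv_mem (hM : IsMedium T) (s₀ : S) {τ : S → S} (hτ : τ ∈ T)
    (hneg : IsNeg hM s₀ τ) {s : S} (heff : τ s ≠ s) :
    (⟨rv τ, rv_mem hM hτ⟩ : ↥T) ∈ ctn hM s₀ s := by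
  by_contra hr
  obtain ⟨h1, -⟩ := step_insert hM s₀ hτ rfl heff hr
  exact neg_not_mem hM s₀ hτ hneg (τ s) (h1 ▸ Finset.mem_insert_self _ _)

lemma insert_not_range (hM : IsMedium T) (s₀ : S) {s : S} {τ : S → S} (hτ : τ ∈ T)
    (hns : (⟨τ, hτ⟩ : ↥T) ∉ ctn hM s₀ s) (hfix : τ s = s) :
    insert (⟨τ, hτ⟩ : ↥T) (ctn hM s₀ s) ∉ Set.range (ctn hM s₀) := by
  rintro ⟨u, hu⟩
  have hus : u ≠ s := by
    intro h
    rw [h] at hu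
    exact hns (hu ▸ Finset.mem_insert_self _ _)
  have hlen : (msg hM s u).length = 1 := by
    have := walklen hM s₀ (msg_concise hM s u) (msg_memT hM s u)
    rw [msg_apply, hu, sd_insert hns] at this
    simpa using this.symm
  obtain ⟨σ, hσ⟩ := List.length_eq_one_iff.1 hlen
  have hσT : σ ∈ T := msg_memT hM s u σ (hσ ▸ List.mem_singleton_self σ)
  have hσs : σ s = u := by
    have := msg_apply hM s u
    rw [hσ] at this
    simpa using this
  have hσeff : σ s ≠ s := by rw [hσs]; exact hus
  by_cases hr : (⟨rv σ, rv_mem hM hσT⟩ : ↥T) ∈ ctn hM s₀ s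
  · have h2 := step_erase hM s₀ hσT hσs hus hr
    have : (⟨τ, hτ⟩ : ↥T) ∈ ctn hM s₀ u := hu ▸ Finset.mem_insert_self _ _
    rw [h2] at this
    exact hns (Finset.mem_of_mem_erase this)
  · obtain ⟨h1, h2⟩ := step_insert hM s₀ hσT hσs hus hr
    have heq : insert (⟨τ, hτ⟩ : ↥T) (ctn hM s₀ s) = insert ⟨σ, hσT⟩ (ctn hM s₀ s) := by
      rw [← hu, h1]
    have : (⟨τ, hτ⟩ : ↥T) = ⟨σ, hσT⟩ := by
      have hτin : (⟨τ, hτ⟩ : ↥T) ∈ insert (⟨σ, hσT⟩ : ↥T) (ctn hM s₀ s) := by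
        rw [← heq]; exact Finset.mem_insert_self _ _
      rcases Finset.mem_insert.1 hτin with h | h
      · exact h
      · exact absurd h hns
    have : τ = σ := congrArg Subtype.val this
    rw [← this] at hσs
    rw [hfix] at hσs
    exact hus hσs.symm

lemma erase_not_range (hM : IsMedium T) (s₀ : S) {s : S} {τ : S → S} (hτ : τ ∈ T)
    (hmem : (⟨rv τ, rv_mem hM hτ⟩ : ↥T) ∈ ctn hM s₀ s) (hfix : τ s = s) :
    (ctn hM s₀ s).erase ⟨rv τ, rv_mem hM hτ⟩ ∉ Set.range (ctn hM s₀) := by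
  rintro ⟨u, hu⟩
  have hus : u ≠ s := by
    intro h
    rw [h] at hu
    have : (⟨rv τ, rv_mem hM hτ⟩ : ↥T) ∈ (ctn hM s₀ s).erase ⟨rv τ, rv_mem hM hτ⟩ :=
      hu ▸ hmem
    exact (Finset.mem_erase.1 this).1 rfl
  have hlen : (msg hM s u).length = 1 := by
    have := walklen hM s₀ (msg_concise hM s u) (msg_memT hM s u)
    rw [msg_apply, hu, sd_erase hmem] at this
    simpa using this.symm
  obtain ⟨σ, hσ⟩ := List.length_eq_one_iff.1 hlen
  have hσT : σ ∈ T := msg_memT hM s u σ (hσ ▸ List.mem_singleton_self σ)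
  have hσs : σ s = u := by
    have := msg_apply hM s u
    rw [hσ] at this
    simpa using this
  by_cases hr : (⟨rv σ, rv_mem hM hσT⟩ : ↥T) ∈ ctn hM s₀ s
  · have h2 := step_erase hM s₀ hσT hσs hus hr
    rw [h2] at hu
    have heq : (⟨rv τ, rv_mem hM hτ⟩ : ↥T) = ⟨rv σ, rv_mem hM hσT⟩ := by
      by_contra hne
      have : (⟨rv τ, rv_mem hM hτ⟩ : ↥T) ∈ (ctn hM s₀ s).erase ⟨rv σ, rv_mem hM hσT⟩ :=
        Finset.mem_erase.2 ⟨hne, hmem⟩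
      rw [hu] at this
      exact (Finset.mem_erase.1 this).1 rfl
    have hveq : rv τ = rv σ := congrArg Subtype.val heq
    have : τ = σ := by
      have := congrArg rv hveq
      rwa [rv_rv' hM hτ, rv_rv' hM hσT] at this
    rw [← this] at hσs
    rw [hfix] at hσs
    exact hus hσs.symm
  · obtain ⟨h1, -⟩ := step_insert hM s₀ hσT hσs hus hr
    rw [h1] at hu
    have : (⟨rv τ, rv_mem hM hτ⟩ : ↥T) ∈ insert (⟨σ, hσT⟩ : ↥T) (ctn hM s₀ s) :=
      Finset.mem_insert_of_mem hmem
    rw [hu] at this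
    exact (Finset.mem_erase.1 this).1 rfl

end Media
namespace Media

variable {S : Type u} {T : Set (S → S)}

lemma pos_action (hM : IsMedium T) (s₀ : S) {τ : S → S} (hτ : τ ∈ T)
    (hpos : ¬ IsNeg hM s₀ τ) (s : S) :
    (gammaAdd (Set.range (ctn hM s₀)) ⟨τ, hτ⟩ ⟨ctn hM s₀ s, Set.mem_range_self s⟩ :
      ↥(Set.range (ctn hM s₀))).val = ctn hM s₀ (τ s) := by
  have hi : (fun (a b : ↥T) => Classical.propDecidable (a = b)) =
      (fun a b => Subtype.instDecidableEq a b) := Subsingleton.elim _ _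
  unfold gammaAdd
  rw [hi]
  by_cases heff : τ s = s
  · by_cases hmem : (⟨τ, hτ⟩ : ↥T) ∈ ctn hM s₀ s
    · have hins : insert (⟨τ, hτ⟩ : ↥T) (ctn hM s₀ s) = ctn hM s₀ s :=
        Finset.insert_eq_self.2 hmem
      rw [heff]
      split <;> simp [hins]
    · split
      · exact absurd ‹_› (insert_not_range hM s₀ hτ hmem heff)
      · simp [heff]
  · have hr := pos_rv_not_mem hM s₀ hτ hpos s
    obtain ⟨h1, -⟩ := step_insert hM s₀ hτ rfl heff hr
    split
    · exact h1.symm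
    · rename_i hn
      exact (hn (show insert _ (ctn hM s₀ s) ∈ _ from h1 ▸ Set.mem_range_self (τ s))).elim

lemma neg_action (hM : IsMedium T) (s₀ : S) {τ : S → S} (hτ : τ ∈ T)
    (hneg : IsNeg hM s₀ τ) (s : S) :
    (gammaRemove (Set.range (ctn hM s₀)) ⟨rv τ, rv_mem hM hτ⟩
      ⟨ctn hM s₀ s, Set.mem_range_self s⟩ : ↥(Set.range (ctn hM s₀))).val
      = ctn hM s₀ (τ s) := by
  have hi : (fun (a b : ↥T) => Classical.propDecidable (a = b)) =
      (fun a b => Subtype.instDecidableEq a b) := Subsingleton.elim _ _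
  unfold gammaRemove
  rw [hi]
  by_cases heff : τ s = s
  · by_cases hmem : (⟨rv τ, rv_mem hM hτ⟩ : ↥T) ∈ ctn hM s₀ s
    · split
      · exact absurd ‹_› (erase_not_range hM s₀ hτ hmem heff)
      · simp [heff]
    · have hers : (ctn hM s₀ s).erase ⟨rv τ, rv_mem hM hτ⟩ = ctn hM s₀ s :=
        Finset.erase_eq_of_notMem hmem
      rw [heff]
      split <;> simp [hers]
  · have hr := neg_rv_mem hM s₀ hτ hneg heff
    have h1 := step_erase hM s₀ hτ rfl heff hr
    split
    · exact h1.symm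
    · rename_i hn
      exact (hn (show (ctn hM s₀ s).erase _ ∈ _ from h1 ▸ Set.mem_range_self (τ s))).elim

lemma pos_gamma_mem (hM : IsMedium T) (s₀ : S) {τ : S → S} (hτ : τ ∈ T)
    (hpos : ¬ IsNeg hM s₀ τ) :
    gammaAdd (Set.range (ctn hM s₀)) ⟨τ, hτ⟩ ∈ mediumTokens (Set.range (ctn hM s₀)) := by
  refine ⟨⟨τ, hτ⟩, ?_, ?_, Or.inl rfl⟩
  · obtain ⟨p, hp⟩ := exists_moved hτ hM
    have hr := pos_rv_not_mem hM s₀ hτ hpos p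
    obtain ⟨h1, -⟩ := step_insert hM s₀ hτ rfl hp hr
    exact ⟨ctn hM s₀ (τ p), Set.mem_range_self _, h1 ▸ Finset.mem_insert_self _ _⟩
  · refine ⟨ctn hM s₀ s₀, Set.mem_range_self _, ?_⟩
    rw [ctn_base]
    exact Finset.notMem_empty _

lemma neg_gamma_mem (hM : IsMedium T) (s₀ : S) {τ : S → S} (hτ : τ ∈ T)
    (hneg : IsNeg hM s₀ τ) :
    gammaRemove (Set.range (ctn hM s₀)) ⟨rv τ, rv_mem hM hτ⟩ ∈
      mediumTokens (Set.range (ctn hM s₀)) := by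
  refine ⟨⟨rv τ, rv_mem hM hτ⟩, ?_, ?_, Or.inr rfl⟩
  · obtain ⟨W, mm, hc, ha, hT, hm⟩ := hneg
    have : rv τ ∈ msg hM s₀ W :=
      (mem_iff_rv_mem hM hc ha hT (msg_concise hM s₀ W) (msg_apply hM s₀ W)
        (msg_memT hM s₀ W) hτ).1 hm
    exact ⟨ctn hM s₀ W, Set.mem_range_self _, (mem_ctn hM s₀ W _).2 this⟩
  · refine ⟨ctn hM s₀ s₀, Set.mem_range_self _, ?_⟩
    rw [ctn_base]
    exact Finset.notMem_empty _

end Media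
namespace Media

variable {S S' : Type u}

/-- conjugation of a token by a bijection of states -/
def conjf (e : S ≃ S') (τ : S → S) : S' → S' := fun A => e (τ (e.symm A))

lemma conjf_inj (e : S ≃ S') : Function.Injective (conjf e) := by
  intro τ σ h
  funext s
  have := congrFun h (e s)
  simp only [conjf, Equiv.symm_apply_apply] at this
  exact e.injective this

lemma conjf_isReverse (e : S ≃ S') {τ σ : S → S} :
    IsReverse (conjf e τ) (conjf e σ) ↔ IsReverse τ σ := by
  constructor
  · intro h P Q hne
    have := h (e P) (e Q) (fun hc => hne (e.injective hc))
    simp only [conjf, Equiv.symm_apply_apply, Equiv.apply_eq_iff_eq] at this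
    exact this
  · intro h P' Q' hne
    have := h (e.symm P') (e.symm Q') (fun hc => hne (e.symm.injective hc))
    simp only [conjf, Equiv.apply_eq_iff_eq_symm_apply]
    exact this

lemma conjf_apply (e : S ≃ S') (s : S) (m : List (S → S)) :
    apply (e s) (m.map (conjf e)) = e (apply s m) := by
  induction m generalizing s with
  | nil => simp
  | cons τ t ih =>
    simp only [List.map_cons, apply_cons]
    rw [show conjf e τ (e s) = e (τ s) by simp [conjf]]
    exact ih (τ s)

lemma conjf_se (e : S ≃ S') (s : S) (m : List (S → S)) :
    StepwiseEffective (e s) (m.map (conjf e)) ↔ StepwiseEffective s m := by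
  induction m generalizing s with
  | nil => simp
  | cons τ t ih =>
    simp only [List.map_cons, se_cons]
    rw [show conjf e τ (e s) = e (τ s) by simp [conjf]]
    rw [ih (τ s)]
    simp [Equiv.apply_eq_iff_eq, ne_eq, EmbeddingLike.apply_eq_iff_eq]

lemma conjf_vacuous (e : S ≃ S') {m : List (S → S)} (h : Vacuous m) :
    Vacuous (m.map (conjf e)) := by
  obtain ⟨f, hfi, hfn, hfr⟩ := h
  have hl : (m.map (conjf e)).length = m.length := List.length_map _
  have hg : ∀ j : Fin (m.map (conjf e)).length,
      (m.map (conjf e)).get j = conjf e (m.get (Fin.cast hl j)) := by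
    intro j
    simp [List.get_eq_getElem, List.getElem_map]
  refine ⟨fun i => Fin.cast hl.symm (f (Fin.cast hl i)), ?_, ?_, ?_⟩
  · intro i
    show Fin.cast hl.symm (f (Fin.cast hl (Fin.cast hl.symm (f (Fin.cast hl i))))) = i
    rw [show Fin.cast hl (Fin.cast hl.symm (f (Fin.cast hl i))) = f (Fin.cast hl i) from rfl,
      hfi]
    rfl
  · intro i h
    apply hfn (Fin.cast hl i)
    have := congrArg (Fin.cast hl) h
    rwa [show Fin.cast hl (Fin.cast hl.symm (f (Fin.cast hl i))) = f (Fin.cast hl i) from rfl]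
      at this
  · intro i
    rw [hg i, hg (Fin.cast hl.symm (f (Fin.cast hl i)))]
    rw [show Fin.cast hl (Fin.cast hl.symm (f (Fin.cast hl i))) = f (Fin.cast hl i) from rfl]
    exact (conjf_isReverse e).2 (hfr (Fin.cast hl i))

lemma isMedium_conj (e : S ≃ S') {T : Set (S → S)} (hM : IsMedium T) {T' : Set (S' → S')}
    (hT' : ∀ g, g ∈ T' ↔ ∃ τ ∈ T, g = conjf e τ) : IsMedium T' := by
  obtain ⟨⟨a, b, hab⟩, ⟨τ0, hτ0⟩, hid, hM1, hM2⟩ := hM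
  refine ⟨⟨e a, e b, fun h => hab (e.injective h)⟩, ⟨conjf e τ0, (hT' _).2 ⟨τ0, hτ0, rfl⟩⟩,
    ?_, ?_, ?_⟩
  · -- no identity
    intro g hg
    obtain ⟨τ, hτ, rfl⟩ := (hT' g).1 hg
    intro hgid
    apply hid τ hτ
    funext s
    have := congrFun hgid (e s)
    simp only [conjf, Equiv.symm_apply_apply, id_eq] at this
    exact e.injective this
  · -- M1
    intro P' Q' hne
    obtain ⟨m, hmT, hmc, hma⟩ := hM1 (e.symm P') (e.symm Q')
      (fun h => hne (by rw [← e.apply_symm_apply P', ← e.apply_symm_apply Q', h]))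
    refine ⟨m.map (conjf e), ?_, ⟨?_, ?_, ?_⟩, ?_⟩
    · intro x hx
      obtain ⟨τ, hτm, rfl⟩ := List.mem_map.1 hx
      exact (hT' _).2 ⟨τ, hmT τ hτm, rfl⟩
    · have := (conjf_se e (e.symm P') m).2 hmc.1
      rwa [e.apply_symm_apply] at this
    · intro x hx y hy
      obtain ⟨τ, hτm, rfl⟩ := List.mem_map.1 hx
      obtain ⟨σ, hσm, rfl⟩ := List.mem_map.1 hy
      intro hr
      exact hmc.2.1 τ hτm σ hσm ((conjf_isReverse e).1 hr)
    · exact hmc.2.2.map (conjf_inj e)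
    · have := conjf_apply e (e.symm P') m
      rw [e.apply_symm_apply, hma, e.apply_symm_apply] at this
      exact this
  · -- M2
    intro P' m' hm'T hcl
    set dconj : (S' → S') → (S → S) := fun g => fun s => e.symm (g (e s)) with hdconj
    have hcd : ∀ g, conjf e (dconj g) = g := by
      intro g
      funext A
      simp [conjf, dconj]
    set m : List (S → S) := m'.map dconj with hm
    have hmm : m.map (conjf e) = m' := by
      rw [hm, List.map_map]
      have : conjf e ∘ dconj = id := funext hcd
      rw [this, List.map_id]
    have hmT : ∀ x ∈ m, x ∈ T := by
      intro x hx
      obtain ⟨g, hgm, rfl⟩ := List.mem_map.1 hx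
      obtain ⟨τ, hτ, rfl⟩ := (hT' g).1 (hm'T g hgm)
      have : dconj (conjf e τ) = τ := by
        funext s
        simp [conjf, dconj]
      rw [this]
      exact hτ
    have hclm : Closed (e.symm P') m := by
      constructor
      · have := (conjf_se e (e.symm P') m)
        rw [e.apply_symm_apply, hmm] at this
        exact this.1 hcl.1
      · have := conjf_apply e (e.symm P') m
        rw [e.apply_symm_apply, hmm, hcl.2] at this
        apply e.injective
        rw [← this, e.apply_symm_apply]
    have hvac : Vacuous m := hM2 (e.symm P') m hmT hclm
    have := conjf_vacuous e hvac
    rwa [hmm] at this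

end Media
open Media

/-- Theorem 12.2: every medium `(S, T)` is isomorphic to the representing medium
`(F, G_F)` of some well-graded family `F` of finite subsets of a set `X`: there
are bijections `α : S → F` and `β : T → G_F` such that `s·τ = v` iff
`α(s)·β(τ) = α(v)` for all states `s, v` and tokens `τ`. -/
theorem medium_iso_representing_medium {S : Type u} {T : Set (S → S)}
    (hM : IsMedium T) :
    ∃ (X : Type u) (F : Set (Finset X)), WellGraded F ∧
      IsMedium (mediumTokens F) ∧
      ∃ (α : S ≃ ↥F) (β : ↥T ≃ ↥(mediumTokens F)),
        ∀ (s v : S) (τ : ↥T), (τ : S → S) s = v ↔ (β τ : ↥F → ↥F) (α s) = α v := by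
  obtain ⟨a0, b0, hab⟩ := hM.1
  set s₀ : S := a0 with hs₀
  set Fam : Set (Finset ↥T) := Set.range (ctn hM s₀) with hFam
  have hbij : Function.Bijective (fun s : S => (⟨ctn hM s₀ s, Set.mem_range_self s⟩ : ↥Fam)) := by
    constructor
    · intro x y h
      exact ctn_inj hM s₀ (congrArg Subtype.val h)
    · rintro ⟨A, u, rfl⟩
      exact ⟨u, rfl⟩
  set α : S ≃ ↥Fam := Equiv.ofBijective _ hbij with hα
  have hαval : ∀ s : S, (α s : Finset ↥T) = ctn hM s₀ s := fun s => rfl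
  have hconj : ∀ (τ : S → S) (s : S), conjf α τ (α s) = α (τ s) := by
    intro τ s
    simp [conjf, Equiv.symm_apply_apply]
  have hconj_pos : ∀ (τ : S → S) (hτ : τ ∈ T), ¬ IsNeg hM s₀ τ →
      conjf α τ = gammaAdd Fam ⟨τ, hτ⟩ := by
    intro τ hτ hpos
    funext A
    obtain ⟨s, rfl⟩ := hbij.2 A
    show conjf α τ (α s) = _
    rw [hconj]
    apply Subtype.ext
    rw [hαval]
    exact (pos_action hM s₀ hτ hpos s).symm
  have hconj_neg : ∀ (τ : S → S) (hτ : τ ∈ T), IsNeg hM s₀ τ →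
      conjf α τ = gammaRemove Fam ⟨rv τ, rv_mem hM hτ⟩ := by
    intro τ hτ hneg
    funext A
    obtain ⟨s, rfl⟩ := hbij.2 A
    show conjf α τ (α s) = _
    rw [hconj]
    apply Subtype.ext
    rw [hαval]
    exact (neg_action hM s₀ hτ hneg s).symm
  have claim1 : ∀ (τ : S → S), τ ∈ T → conjf α τ ∈ mediumTokens Fam := by
    intro τ hτ
    by_cases hn : IsNeg hM s₀ τ
    · rw [hconj_neg τ hτ hn]
      exact neg_gamma_mem hM s₀ hτ hn
    · rw [hconj_pos τ hτ hn]
      exact pos_gamma_mem hM s₀ hτ hn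
  have claim2 : ∀ g ∈ mediumTokens Fam, ∃ τ ∈ T, g = conjf α τ := by
    rintro g ⟨x, ⟨A, hA, hxA⟩, -, hg | hg⟩
    · obtain ⟨u, rfl⟩ := hA
      have hpos : ¬ IsNeg hM s₀ x.1 := by
        intro hn
        exact neg_not_mem hM s₀ x.2 hn u hxA
      exact ⟨x.1, x.2, by rw [hg, hconj_pos x.1 x.2 hpos]⟩
    · obtain ⟨u, rfl⟩ := hA
      have hx1 : x.1 ∈ msg hM s₀ u := (mem_ctn hM s₀ u x).1 hxA
      have hneg : IsNeg hM s₀ (rv x.1) := by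
        refine ⟨u, msg hM u s₀, msg_concise hM u s₀, msg_apply hM u s₀, msg_memT hM u s₀, ?_⟩
        exact (mem_iff_rv_mem hM (msg_concise hM s₀ u) (msg_apply hM s₀ u) (msg_memT hM s₀ u)
          (msg_concise hM u s₀) (msg_apply hM u s₀) (msg_memT hM u s₀) x.2).1 hx1
      refine ⟨rv x.1, rv_mem hM x.2, ?_⟩
      rw [hg, hconj_neg (rv x.1) (rv_mem hM x.2) hneg]
      have : (⟨rv (rv x.1), rv_mem hM (rv_mem hM x.2)⟩ : ↥T) = x :=
        Subtype.ext (rv_rv' hM x.2)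
      rw [this]
  have hmt : ∀ g, g ∈ mediumTokens Fam ↔ ∃ τ ∈ T, g = conjf α τ := by
    intro g
    constructor
    · exact claim2 g
    · rintro ⟨τ, hτ, rfl⟩
      exact claim1 τ hτ
  have hβbij : Function.Bijective
      (fun t : ↥T => (⟨conjf α t.1, claim1 t.1 t.2⟩ : ↥(mediumTokens Fam))) := by
    constructor
    · intro t t' h
      exact Subtype.ext (conjf_inj α (congrArg Subtype.val h))
    · rintro ⟨g, hg⟩
      obtain ⟨τ, hτ, rfl⟩ := claim2 g hg
      exact ⟨⟨τ, hτ⟩, rfl⟩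
  refine ⟨↥T, Fam, wellGraded_range hM s₀, isMedium_conj α hM hmt,
    α, Equiv.ofBijective _ hβbij, ?_⟩
  intro s v τ
  show (τ : S → S) s = v ↔ conjf α τ.1 (α s) = α v
  rw [hconj]
  exact (Equiv.apply_eq_iff_eq α).symm
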